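/- Let μ ≤ κ ≤ θ be uncountable cardinals with κ, θ regular, and Y ⊆ P_κ H(θ) stationary. If SP_Y(μ, κ, H(θ)) holds (every μ-Y-slender (κ, H(θ))-list has a cofinal branch), then AGP_Y(μ, κ, θ) holds: for every cofinal S ⊆ P_κ H(θ) and every x ∈ H(θ), the set of M ∈ Y such that (M, x) is almost μ-guessed by S is stationary in P_κ H(θ). -/

import Mathlib

open Cardinal

universe u

/-- `H(θ)`: the class of sets hereditarily of cardinality `< θ`. -/
def Hset (θ : Cardinal.{u + 1}) : Set ZFSet.{u} :=
  {x : ZFSet.{u} | ZFSet.Hereditarily (fun y => #y.toSet < θ) x}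

/-- `C` is a club in `P_κ(A)`: elements are subsets of `A` of size `< κ`, `C` is closed
under unions of nonempty `⊆`-chains of length `< κ`, and `C` is cofinal. -/
def ClubIn (κ : Cardinal.{u + 1}) (A : Set ZFSet.{u}) (C : Set (Set ZFSet.{u})) : Prop :=
  (∀ y ∈ C, y ⊆ A ∧ #y < κ) ∧
    (∀ D : Set (Set ZFSet.{u}), D ⊆ C → D.Nonempty → #D < κ → IsChain (· ⊆ ·) D →
      ⋃₀ D ∈ C) ∧
    (∀ x : Set ZFSet.{u}, x ⊆ A → #x < κ → ∃ y ∈ C, x ⊆ y)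

/-- `S` is stationary in `P_κ(A)`: it meets every club in `P_κ(A)`. -/
def StatIn (κ : Cardinal.{u + 1}) (A : Set ZFSet.{u}) (S : Set (Set ZFSet.{u})) : Prop :=
  (∀ y ∈ S, y ⊆ A ∧ #y < κ) ∧ ∀ C : Set (Set ZFSet.{u}), ClubIn κ A C → (S ∩ C).Nonempty

/-- `d` is `(μ, M)`-approximated (as a subset of `x`): for every `z ∈ M ∩ P_μ(x)` there is
`e ∈ M` with `d ∩ z = e ∩ z`. -/
def Approx (μ : Cardinal.{u + 1}) (M : Set ZFSet.{u}) (x : ZFSet.{u})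
    (d : Set ZFSet.{u}) : Prop :=
  ∀ z : ZFSet.{u}, z ∈ M → z.toSet ⊆ x.toSet → #z.toSet < μ →
    ∃ e ∈ M, d ∩ z.toSet = e.toSet ∩ z.toSet

/-- `d` is `M`-guessed: there is `e ∈ M` with `d ∩ M = e ∩ M`. -/
def Guessed (M : Set ZFSet.{u}) (d : Set ZFSet.{u}) : Prop :=
  ∃ e ∈ M, d ∩ M = e.toSet ∩ M

/-- Every `(μ, M)`-approximated subset of `x` is `M`-guessed. -/
def GuessingFor (μ : Cardinal.{u + 1}) (M : Set ZFSet.{u}) (x : ZFSet.{u}) : Prop :=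
  ∀ d : Set ZFSet.{u}, d ⊆ x.toSet → Approx μ M x d → Guessed M d

/-- The `(κ, X)`-list `d` is `μ`-`Y`-slender: for all sufficiently large `θ` there is a
club `C ⊆ P_κ(H(θ))` such that for all `M ∈ C` with `M ∩ X ∈ Y` and all
`y ∈ M ∩ P_μ(X)`, `d_{M ∩ X} ∩ y ∈ M`. -/
def Slender (μ κ : Cardinal.{u + 1}) (X : Set ZFSet.{u}) (Y : Set (Set ZFSet.{u}))
    (d : Set ZFSet.{u} → Set ZFSet.{u}) : Prop :=
  ∃ θ₀ : Cardinal.{u + 1}, ∀ θ : Cardinal.{u + 1}, θ₀ ≤ θ →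
    ∃ C : Set (Set ZFSet.{u}), ClubIn κ (Hset θ) C ∧
      ∀ M ∈ C, M ∩ X ∈ Y →
        ∀ y : ZFSet.{u}, y ∈ M → y.toSet ⊆ X → #y.toSet < μ →
          ∃ e ∈ M, e.toSet = d (M ∩ X) ∩ y.toSet

/-- `b` is a cofinal branch of the `(κ, X)`-list `d`. -/
def CofBranch (κ : Cardinal.{u + 1}) (X : Set ZFSet.{u})
    (d : Set ZFSet.{u} → Set ZFSet.{u}) (b : Set ZFSet.{u}) : Prop :=
  b ⊆ X ∧ ∀ x : Set ZFSet.{u}, x ⊆ X → #x < κ →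
    ∃ z : Set ZFSet.{u}, z ⊆ X ∧ #z < κ ∧ x ⊆ z ∧ b ∩ x = d z ∩ x

/-- `b` is a `Y`-ineffable branch of the `(κ, X)`-list `d`: the set of `x ∈ Y` with
`b ∩ x = d_x` is stationary in `P_κ(X)`. -/
def IneffBranch (κ : Cardinal.{u + 1}) (X : Set ZFSet.{u}) (Y : Set (Set ZFSet.{u}))
    (d : Set ZFSet.{u} → Set ZFSet.{u}) (b : Set ZFSet.{u}) : Prop :=
  b ⊆ X ∧ StatIn κ X {x : Set ZFSet.{u} | x ∈ Y ∧ b ∩ x = d x}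

/-- `(M, x)` is almost `μ`-guessed by `S`: `x ∈ M` and every `(μ, M)`-approximated subset
of `x` is `N`-guessed for some `N ∈ S` with `x ∈ N ⊆ M`. -/
def AlmostGuessed (μ : Cardinal.{u + 1}) (S : Set (Set ZFSet.{u})) (M : Set ZFSet.{u})
    (x : ZFSet.{u}) : Prop :=
  x ∈ M ∧ ∀ d : Set ZFSet.{u}, d ⊆ x.toSet → Approx μ M x d →
    ∃ N ∈ S, x ∈ N ∧ N ⊆ M ∧ Guessed N d

theorem ZFSet.toSet_inter (x y : ZFSet.{u}) : (x ∩ y).toSet = x.toSet ∩ y.toSet :=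
  ZFSet.coe_inter x y

theorem ZFSet.toSet_sep (a : ZFSet.{u}) (p : ZFSet.{u} → Prop) :
    (ZFSet.sep p a).toSet = {x ∈ a.toSet | p x} := ZFSet.coe_sep a p

theorem ZFSet.mem_toSet (a u : ZFSet.{u}) : a ∈ u.toSet ↔ a ∈ u := Iff.rfl

namespace Stmt14Aux

lemma small_union {κ : Cardinal.{u+1}} (hκ : κ.IsRegular) {s t : Set ZFSet.{u}}
    (hs : #s < κ) (ht : #t < κ) : #(s ∪ t : Set ZFSet.{u}) < κ :=
  (Cardinal.mk_union_le s t).trans_lt (Cardinal.add_lt_of_lt hκ.aleph0_le hs ht)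

lemma small_sUnion {κ : Cardinal.{u+1}} (hκ : κ.IsRegular) {D : Set (Set ZFSet.{u})}
    (hD : #D < κ) (h : ∀ s ∈ D, #s < κ) : #(⋃₀ D) < κ := by
  refine (Cardinal.mk_sUnion_le D).trans_lt (Cardinal.mul_lt_of_lt hκ.aleph0_le hD ?_)
  exact Cardinal.iSup_lt_of_isRegular hκ hD fun s => h s s.2

lemma mk_range_nat_le {β : Type (u+1)} (f : ℕ → β) :
    #(Set.range f) ≤ (Cardinal.aleph0 : Cardinal.{u+1}) := by
  have h := Cardinal.mk_range_le_lift (f := f)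
  rwa [Cardinal.lift_uzero, Cardinal.mk_nat, Cardinal.lift_aleph0] at h

lemma small_iUnion_nat {κ : Cardinal.{u+1}} (hκ : κ.IsRegular) (hℵ : Cardinal.aleph0 < κ)
    {A : ℕ → Set ZFSet.{u}} (h : ∀ n, #(A n) < κ) : #(⋃ n, A n) < κ := by
  rw [← Set.sUnion_range]
  refine small_sUnion hκ (lt_of_le_of_lt (mk_range_nat_le A) hℵ) ?_
  rintro s ⟨n, rfl⟩; exact h n

lemma mem_Hset {θ : Cardinal.{u+1}} {x : ZFSet.{u}} :
    x ∈ Hset θ ↔ #x.toSet < θ ∧ ∀ y ∈ x, y ∈ Hset θ := by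
  constructor
  · intro h
    exact ⟨(ZFSet.hereditarily_iff.mp h).1, fun y hy => (ZFSet.hereditarily_iff.mp h).2 y hy⟩
  · intro h
    exact ZFSet.hereditarily_iff.mpr ⟨h.1, fun y hy => h.2 y hy⟩

lemma hset_card {θ : Cardinal.{u+1}} {x : ZFSet.{u}} (h : x ∈ Hset θ) : #x.toSet < θ :=
  (mem_Hset.mp h).1

lemma hset_mem {θ : Cardinal.{u+1}} {x y : ZFSet.{u}} (h : x ∈ Hset θ) (hy : y ∈ x) :
    y ∈ Hset θ := (mem_Hset.mp h).2 y hy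

lemma hset_mono {θ θ' : Cardinal.{u+1}} (hθ : θ ≤ θ') : Hset.{u} θ ⊆ Hset θ' := by
  intro x
  induction x using ZFSet.inductionOn with
  | _ x ih =>
    intro hx
    rw [mem_Hset] at hx ⊢
    exact ⟨hx.1.trans_le hθ, fun y hy => ih y hy (hx.2 y hy)⟩

lemma hset_of {θ : Cardinal.{u+1}} {x : ZFSet.{u}} (h1 : #x.toSet < θ)
    (h2 : ∀ y ∈ x, y ∈ Hset θ) : x ∈ Hset θ := mem_Hset.mpr ⟨h1, h2⟩

lemma inter_mem_hset_left {θ : Cardinal.{u+1}} {a : ZFSet.{u}} (ha : a ∈ Hset θ)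
    (b : ZFSet.{u}) : a ∩ b ∈ Hset θ := by
  refine hset_of ?_ ?_
  · refine lt_of_le_of_lt (Cardinal.mk_le_mk_of_subset ?_) (hset_card ha)
    rw [ZFSet.toSet_inter]; exact Set.inter_subset_left
  · intro y hy; exact hset_mem ha (ZFSet.mem_inter.mp hy).1

lemma inter_mem_hset_right {θ : Cardinal.{u+1}} (a : ZFSet.{u}) {b : ZFSet.{u}}
    (hb : b ∈ Hset θ) : a ∩ b ∈ Hset θ := by
  refine hset_of ?_ ?_
  · refine lt_of_le_of_lt (Cardinal.mk_le_mk_of_subset ?_) (hset_card hb)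
    rw [ZFSet.toSet_inter]; exact Set.inter_subset_right
  · intro y hy; exact hset_mem hb (ZFSet.mem_inter.mp hy).2

lemma sep_mem_hset {θ : Cardinal.{u+1}} {x : ZFSet.{u}} (h : x ∈ Hset θ)
    (p : ZFSet.{u} → Prop) : ZFSet.sep p x ∈ Hset θ := by
  refine hset_of ?_ ?_
  · refine lt_of_le_of_lt (Cardinal.mk_le_mk_of_subset ?_) (hset_card h)
    rw [ZFSet.toSet_sep]; exact Set.sep_subset _ _
  · intro y hy; exact hset_mem h (ZFSet.mem_sep.mp hy).1

lemma club_restrict {κ : Cardinal.{u+1}} (hκ : κ.IsRegular) {A : Set ZFSet.{u}}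
    {C : Set (Set ZFSet.{u})} (hC : ClubIn κ A C) {w : Set ZFSet.{u}} (hw : w ⊆ A)
    (hwκ : #w < κ) : ClubIn κ A {M | M ∈ C ∧ w ⊆ M} := by
  obtain ⟨hb, hcl, hcof⟩ := hC
  refine ⟨fun y hy => hb y hy.1, ?_, ?_⟩
  · intro D hD hne hDκ hch
    refine ⟨hcl D (fun s hs => (hD hs).1) hne hDκ hch, ?_⟩
    obtain ⟨y0, hy0⟩ := hne
    exact (hD hy0).2.trans (Set.subset_sUnion_of_mem hy0)
  · intro s hs hsκ
    obtain ⟨y, hyC, hy⟩ := hcof (s ∪ w) (Set.union_subset hs hw) (small_union hκ hsκ hwκ)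
    exact ⟨y, ⟨hyC, Set.subset_union_right.trans hy⟩, Set.subset_union_left.trans hy⟩

noncomputable def pickC (θ : Cardinal.{u+1}) (C₀ : Set (Set ZFSet.{u}))
    (B : Set ZFSet.{u}) : Set ZFSet.{u} :=
  @dite _ (∃ y, y ∈ C₀ ∧ B ∩ Hset θ ⊆ y) (Classical.propDecidable _)
    (fun h => h.choose) (fun _ => ∅)

lemma pickC_spec {θ : Cardinal.{u+1}} {C₀ : Set (Set ZFSet.{u})} {B : Set ZFSet.{u}}
    (h : ∃ y, y ∈ C₀ ∧ B ∩ Hset θ ⊆ y) :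
    pickC θ C₀ B ∈ C₀ ∧ B ∩ Hset θ ⊆ pickC θ C₀ B := by
  rw [pickC, dif_pos h]; exact h.choose_spec

def smallsSet (μ : Cardinal.{u+1}) (B : Set ZFSet.{u}) : Set ZFSet.{u} :=
  ⋃₀ ((fun y : ZFSet.{u} => y.toSet) '' {y | y ∈ B ∧ #y.toSet < μ})

lemma mem_smallsSet {μ : Cardinal.{u+1}} {B : Set ZFSet.{u}} {t : ZFSet.{u}} :
    t ∈ smallsSet μ B ↔ ∃ y, y ∈ B ∧ #y.toSet < μ ∧ t ∈ y.toSet := by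
  constructor
  · rintro ⟨_, ⟨y, hy, rfl⟩, ht⟩
    exact ⟨y, hy.1, hy.2, ht⟩
  · rintro ⟨y, h1, h2, ht⟩
    exact ⟨y.toSet, ⟨y, ⟨h1, h2⟩, rfl⟩, ht⟩

lemma smallsSet_small {κ μ : Cardinal.{u+1}} (hκ : κ.IsRegular) (hμκ : μ ≤ κ)
    {B : Set ZFSet.{u}} (hB : #B < κ) : #(smallsSet μ B) < κ := by
  refine small_sUnion hκ
    (lt_of_le_of_lt Cardinal.mk_image_le
      (lt_of_le_of_lt (Cardinal.mk_le_mk_of_subset fun y hy => hy.1) hB)) ?_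
  rintro s ⟨y, hy, rfl⟩
  exact lt_of_lt_of_le hy.2 hμκ

def intersSet (B : Set ZFSet.{u}) : Set ZFSet.{u} := Set.image2 (· ∩ ·) B B

lemma intersSet_small {κ : Cardinal.{u+1}} (hκ : κ.IsRegular) {B : Set ZFSet.{u}}
    (hB : #B < κ) : #(intersSet B) < κ :=
  lt_of_le_of_lt Cardinal.mk_image2_le (Cardinal.mul_lt_of_lt hκ.aleph0_le hB hB)

noncomputable def closA (μ θ : Cardinal.{u+1}) (C₀ : Set (Set ZFSet.{u}))
    (seed : Set ZFSet.{u}) : ℕ → Set ZFSet.{u}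
  | 0 => seed
  | n + 1 =>
      closA μ θ C₀ seed n ∪ pickC θ C₀ (closA μ θ C₀ seed n) ∪
        smallsSet μ (closA μ θ C₀ seed n) ∪ intersSet (closA μ θ C₀ seed n)

lemma closA_zero (μ θ : Cardinal.{u+1}) (C₀ : Set (Set ZFSet.{u})) (seed : Set ZFSet.{u}) :
    closA μ θ C₀ seed 0 = seed := rfl

lemma closA_succ (μ θ : Cardinal.{u+1}) (C₀ : Set (Set ZFSet.{u})) (seed : Set ZFSet.{u})
    (n : ℕ) :
    closA μ θ C₀ seed (n + 1) =
      closA μ θ C₀ seed n ∪ pickC θ C₀ (closA μ θ C₀ seed n) ∪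
        smallsSet μ (closA μ θ C₀ seed n) ∪ intersSet (closA μ θ C₀ seed n) := rfl

/-- The "good" club used to witness slenderness. -/
def GoodSet (μ κ θ θ' : Cardinal.{u+1}) (C₀ : Set (Set ZFSet.{u})) (x : ZFSet.{u}) :
    Set (Set ZFSet.{u}) :=
  {M' | M' ⊆ Hset θ' ∧ #M' < κ ∧ x ∈ M' ∧ M' ∩ Hset θ ∈ C₀ ∧
    (∀ y : ZFSet.{u}, y ∈ M' → #y.toSet < μ → y.toSet ⊆ M') ∧
    (∀ a ∈ M', ∀ b ∈ M', a ∩ b ∈ M')}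

lemma goodClub {μ κ θ θ' : Cardinal.{u+1}} (hκreg : κ.IsRegular)
    (hμunc : Cardinal.aleph0 < μ) (hμκ : μ ≤ κ) (hθθ' : θ ≤ θ')
    {C₀ : Set (Set ZFSet.{u})} (hC₀ : ClubIn κ (Hset θ) C₀)
    {x : ZFSet.{u}} (hx : x ∈ Hset θ) :
    ClubIn κ (Hset θ') (GoodSet μ κ θ θ' C₀ x) := by
  have hℵκ : Cardinal.aleph0 < κ := hμunc.trans_le hμκ
  refine ⟨fun y hy => ⟨hy.1, hy.2.1⟩, ?_, ?_⟩
  · -- chain closure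
    intro D hD hne hDκ hch
    obtain ⟨M0, hM0⟩ := hne
    refine ⟨?_, ?_, ?_, ?_, ?_, ?_⟩
    · intro t ht
      obtain ⟨M, hM, htM⟩ := ht
      exact (hD hM).1 htM
    · exact small_sUnion hκreg hDκ fun s hs => (hD hs).2.1
    · exact ⟨M0, hM0, (hD hM0).2.2.1⟩
    · -- trace is in C₀
      have himg : ((· ∩ Hset θ) '' D) ⊆ C₀ := by
        rintro _ ⟨M, hM, rfl⟩; exact (hD hM).2.2.2.1
      have hchain : IsChain (· ⊆ ·) ((· ∩ Hset θ) '' D) := by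
        rintro _ ⟨M1, hM1, rfl⟩ _ ⟨M2, hM2, rfl⟩ hne12
        rcases eq_or_ne M1 M2 with rfl | hne2
        · exact absurd rfl hne12
        · rcases hch hM1 hM2 hne2 with h | h
          · exact Or.inl (Set.inter_subset_inter_left _ h)
          · exact Or.inr (Set.inter_subset_inter_left _ h)
      have hU : ⋃₀ ((· ∩ Hset θ) '' D) = (⋃₀ D) ∩ Hset θ := by
        ext t
        constructor
        · rintro ⟨_, ⟨M, hM, rfl⟩, htM, htH⟩
          exact ⟨⟨M, hM, htM⟩, htH⟩
        · rintro ⟨⟨M, hM, htM⟩, htH⟩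
          exact ⟨M ∩ Hset θ, ⟨M, hM, rfl⟩, htM, htH⟩
      rw [← hU]
      exact hC₀.2.1 _ himg ⟨M0 ∩ Hset θ, ⟨M0, hM0, rfl⟩⟩
        (lt_of_le_of_lt Cardinal.mk_image_le hDκ) hchain
    · -- small transitivity
      intro y hy hyμ
      obtain ⟨M, hM, hyM⟩ := hy
      exact ((hD hM).2.2.2.2.1 y hyM hyμ).trans (Set.subset_sUnion_of_mem hM)
    · -- intersection closure
      intro a ha b hb
      obtain ⟨Ma, hMa, haM⟩ := ha
      obtain ⟨Mb, hMb, hbM⟩ := hb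
      rcases eq_or_ne Ma Mb with rfl | hne2
      · exact Set.subset_sUnion_of_mem hMa ((hD hMa).2.2.2.2.2 a haM b hbM)
      · rcases hch hMa hMb hne2 with h | h
        · exact Set.subset_sUnion_of_mem hMb ((hD hMb).2.2.2.2.2 a (h haM) b hbM)
        · exact Set.subset_sUnion_of_mem hMa ((hD hMa).2.2.2.2.2 a haM b (h hbM))
  · -- cofinality
    intro s hs hsκ
    set A : ℕ → Set ZFSet.{u} := closA μ θ C₀ (s ∪ {x}) with hA
    have key : ∀ n, A n ⊆ Hset θ' ∧ #(A n) < κ := by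
      intro n
      induction n with
      | zero =>
        constructor
        · refine Set.union_subset hs ?_
          intro t ht
          rw [Set.mem_singleton_iff] at ht
          subst ht
          exact hset_mono hθθ' hx
        · refine small_union hκreg hsκ ?_
          rw [Cardinal.mk_singleton]
          exact lt_of_lt_of_le Cardinal.one_lt_aleph0 hκreg.aleph0_le
      | succ n ih =>
        have hex : ∃ y, y ∈ C₀ ∧ A n ∩ Hset θ ⊆ y :=
          hC₀.2.2 _ Set.inter_subset_right
            ((Cardinal.mk_le_mk_of_subset Set.inter_subset_left).trans_lt ih.2)
        have hpick := pickC_spec hex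
        have hpickH : pickC θ C₀ (A n) ⊆ Hset θ := (hC₀.1 _ hpick.1).1
        have hpickκ : #(pickC θ C₀ (A n)) < κ := (hC₀.1 _ hpick.1).2
        constructor
        · rw [hA, closA_succ, ← hA]
          refine Set.union_subset (Set.union_subset (Set.union_subset ih.1 ?_) ?_) ?_
          · exact hpickH.trans (hset_mono hθθ')
          · intro t ht
            rw [mem_smallsSet] at ht
            obtain ⟨y, hyA, _, hty⟩ := ht
            exact hset_mem (ih.1 hyA) (by rwa [← ZFSet.mem_toSet])
          · rintro t ⟨a, haA, b, hbA, rfl⟩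
            exact inter_mem_hset_left (ih.1 haA) b
        · rw [hA, closA_succ, ← hA]
          refine small_union hκreg (small_union hκreg (small_union hκreg ih.2 hpickκ) ?_) ?_
          · exact smallsSet_small hκreg hμκ ih.2
          · exact intersSet_small hκreg ih.2
    have hex : ∀ n, ∃ y, y ∈ C₀ ∧ A n ∩ Hset θ ⊆ y := fun n =>
      hC₀.2.2 _ Set.inter_subset_right
        ((Cardinal.mk_le_mk_of_subset Set.inter_subset_left).trans_lt (key n).2)
    have hstep : ∀ n, A (n+1) = A n ∪ pickC θ C₀ (A n) ∪ smallsSet μ (A n) ∪ intersSet (A n) := by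
      intro n; rw [hA, closA_succ]
    have hmono1 : ∀ n, A n ⊆ A (n + 1) := by
      intro n
      rw [hstep n]
      exact (Set.subset_union_left.trans Set.subset_union_left).trans Set.subset_union_left
    have hmono : ∀ m n, m ≤ n → A m ⊆ A n := by
      intro m n h
      induction h with
      | refl => exact subset_rfl
      | step h ih => exact ih.trans (hmono1 _)
    have hpickA : ∀ n, pickC θ C₀ (A n) ⊆ A (n + 1) := by
      intro n
      rw [hstep n]
      exact (Set.subset_union_right.trans Set.subset_union_left).trans Set.subset_union_left
    have hsmallA : ∀ n, smallsSet μ (A n) ⊆ A (n + 1) := by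
      intro n
      rw [hstep n]
      exact Set.subset_union_right.trans Set.subset_union_left
    have hintA : ∀ n, intersSet (A n) ⊆ A (n + 1) := by
      intro n
      rw [hstep n]
      exact Set.subset_union_right
    have hpickH : ∀ n, pickC θ C₀ (A n) ⊆ Hset θ := fun n => (hC₀.1 _ (pickC_spec (hex n)).1).1
    have hymono : ∀ m n, m ≤ n → pickC θ C₀ (A m) ⊆ pickC θ C₀ (A n) := by
      intro m n h
      rcases eq_or_lt_of_le h with rfl | hlt
      · exact subset_rfl
      · intro t ht
        refine (pickC_spec (hex n)).2 ⟨?_, hpickH m ht⟩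
        exact hmono (m + 1) n hlt (hpickA m ht)
    refine ⟨⋃ n, A n, ⟨?_, ?_, ?_, ?_, ?_, ?_⟩, ?_⟩
    · exact Set.iUnion_subset fun n => (key n).1
    · exact small_iUnion_nat hκreg hℵκ fun n => (key n).2
    · exact Set.mem_iUnion.mpr ⟨0, Or.inr rfl⟩
    · -- trace in C₀
      have heq : ⋃₀ Set.range (fun n => pickC θ C₀ (A n)) = (⋃ n, A n) ∩ Hset θ := by
        ext t
        constructor
        · rintro ⟨_, ⟨n, rfl⟩, ht⟩
          exact ⟨Set.mem_iUnion.mpr ⟨n + 1, hpickA n ht⟩, hpickH n ht⟩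
        · rintro ⟨ht1, ht2⟩
          obtain ⟨n, htn⟩ := Set.mem_iUnion.mp ht1
          exact ⟨pickC θ C₀ (A n), ⟨n, rfl⟩, (pickC_spec (hex n)).2 ⟨htn, ht2⟩⟩
      rw [← heq]
      refine hC₀.2.1 _ ?_ ⟨_, ⟨0, rfl⟩⟩ ?_ ?_
      · rintro _ ⟨n, rfl⟩
        exact (pickC_spec (hex n)).1
      · exact lt_of_le_of_lt (mk_range_nat_le _) hℵκ
      · rintro _ ⟨m, rfl⟩ _ ⟨n, rfl⟩ hne12
        rcases le_total m n with h | h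
        · exact Or.inl (hymono m n h)
        · exact Or.inr (hymono n m h)
    · -- small transitivity
      intro y hy hyμ
      obtain ⟨n, hn⟩ := Set.mem_iUnion.mp hy
      intro t ht
      refine Set.mem_iUnion.mpr ⟨n + 1, hsmallA n ?_⟩
      exact mem_smallsSet.mpr ⟨y, hn, hyμ, ht⟩
    · -- intersection closure
      intro a ha b hb
      obtain ⟨m, hm⟩ := Set.mem_iUnion.mp ha
      obtain ⟨n, hn⟩ := Set.mem_iUnion.mp hb
      refine Set.mem_iUnion.mpr ⟨max m n + 1, hintA _ ?_⟩
      exact Set.mem_image2_of_mem (hmono m _ (le_max_left m n) hm)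
        (hmono n _ (le_max_right m n) hn)
    · -- seed contained
      intro t ht
      exact Set.mem_iUnion.mpr ⟨0, Or.inl ht⟩

noncomputable def theList (θ κ : Cardinal.{u+1}) (cex Msel : Set ZFSet.{u} → Set ZFSet.{u})
    (z : Set ZFSet.{u}) : Set ZFSet.{u} :=
  @dite _ (z ⊆ Hset θ ∧ #z < κ) (Classical.propDecidable _)
    (fun _ => cex (Msel z) ∩ z) (fun _ => ∅)

lemma theList_sub (θ κ : Cardinal.{u+1}) (cex Msel : Set ZFSet.{u} → Set ZFSet.{u})
    (z : Set ZFSet.{u}) : theList θ κ cex Msel z ⊆ z := by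
  unfold theList
  split
  · exact Set.inter_subset_right
  · exact Set.empty_subset z

lemma theList_val {θ κ : Cardinal.{u+1}} {cex Msel : Set ZFSet.{u} → Set ZFSet.{u}}
    {z : Set ZFSet.{u}} (h1 : z ⊆ Hset θ) (h2 : #z < κ) :
    theList θ κ cex Msel z = cex (Msel z) ∩ z := by
  unfold theList
  rw [dif_pos ⟨h1, h2⟩]

end Stmt14Aux

open Stmt14Aux in
/-- If `μ ≤ κ ≤ θ` are uncountable with `κ, θ` regular, `Y ⊆ P_κ(H(θ))` is stationary, and
`SP_Y(μ, κ, H(θ))` holds (every `μ`-`Y`-slender `(κ, H(θ))`-list has a cofinal branch),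
then `AGP_Y(μ, κ, θ)` holds: for every cofinal `S ⊆ P_κ(H(θ))` and every `x ∈ H(θ)`,
the set of `M ∈ Y` such that `(M, x)` is almost `μ`-guessed by `S` is stationary in
`P_κ(H(θ))`. -/
theorem stmt14 (μ κ θ : Cardinal.{u + 1})
    (hκreg : κ.IsRegular) (hθreg : θ.IsRegular)
    (hμunc : Cardinal.aleph0 < μ) (hμκ : μ ≤ κ) (hκθ : κ ≤ θ)
    (Y : Set (Set ZFSet.{u})) (hY : StatIn κ (Hset θ) Y)
    (hSP : ∀ d : Set ZFSet.{u} → Set ZFSet.{u}, (∀ x : Set ZFSet.{u}, d x ⊆ x) →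
      Slender μ κ (Hset θ) Y d → ∃ b : Set ZFSet.{u}, CofBranch κ (Hset θ) d b) :
    ∀ S : Set (Set ZFSet.{u}),
      (∀ N ∈ S, N ⊆ Hset θ ∧ #N < κ) →
      (∀ x : Set ZFSet.{u}, x ⊆ Hset θ → #x < κ → ∃ N ∈ S, x ⊆ N) →
      ∀ x : ZFSet.{u}, x ∈ Hset θ →
        StatIn κ (Hset θ) {M : Set ZFSet.{u} | M ∈ Y ∧ AlmostGuessed μ S M x} := by
  intro S hS1 hS2 x hx
  classical
  refine ⟨fun y hy => hY.1 y hy.1, ?_⟩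
  intro C₀ hC₀
  by_contra hne
  rw [Set.not_nonempty_iff_eq_empty] at hne
  -- From the failure, every M ∈ Y ∩ C₀ with x ∈ M carries a counterexample.
  have Hfail : ∀ M : Set ZFSet.{u}, M ∈ Y → M ∈ C₀ → x ∈ M →
      ∃ dd : Set ZFSet.{u}, dd ⊆ x.toSet ∧ Approx μ M x dd ∧
        ∀ N, N ∈ S → x ∈ N → N ⊆ M → ¬ Guessed N dd := by
    intro M hMY hMC hxM
    have hMG : M ∉ ({M : Set ZFSet.{u} | M ∈ Y ∧ AlmostGuessed μ S M x} ∩ C₀) := by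
      rw [hne]; exact Set.notMem_empty M
    have hnAG : ¬ AlmostGuessed μ S M x := fun hAG => hMG ⟨⟨hMY, hAG⟩, hMC⟩
    have h2 : ¬ ∀ d : Set ZFSet.{u}, d ⊆ x.toSet → Approx μ M x d →
        ∃ N ∈ S, x ∈ N ∧ N ⊆ M ∧ Guessed N d := fun h => hnAG ⟨hxM, h⟩
    push_neg at h2
    obtain ⟨dd, h3, h4, h5⟩ := h2
    exact ⟨dd, h3, h4, h5⟩
  -- Choice of a Y ∩ C₀ superset for every small set.
  have hbig : ∀ z : Set ZFSet.{u}, z ⊆ Hset θ → #z < κ →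
      ∃ M : Set ZFSet.{u}, M ∈ Y ∧ M ∈ C₀ ∧ x ∈ M ∧ z ⊆ M := by
    intro z hz1 hz2
    have hw : insert x z ⊆ Hset θ := Set.insert_subset hx hz1
    have hwκ : #(insert x z : Set ZFSet.{u}) < κ := by
      refine lt_of_le_of_lt Cardinal.mk_insert_le ?_
      exact Cardinal.add_lt_of_lt hκreg.aleph0_le hz2
        (lt_of_lt_of_le Cardinal.one_lt_aleph0 hκreg.aleph0_le)
    obtain ⟨M, hM⟩ := hY.2 _ (club_restrict hκreg hC₀ hw hwκ)
    exact ⟨M, hM.1, hM.2.1, hM.2.2 (Set.mem_insert x z),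
      fun t ht => hM.2.2 (Set.mem_insert_of_mem _ ht)⟩
  obtain ⟨Msel, hMsel1, hMsel2⟩ :
      ∃ g : Set ZFSet.{u} → Set ZFSet.{u},
        (∀ z, z ⊆ Hset θ → #z < κ → (g z ∈ Y ∧ g z ∈ C₀ ∧ x ∈ g z ∧ z ⊆ g z)) ∧
        (∀ z, z ∈ Y → z ∈ C₀ → x ∈ z → g z = z) := by
    refine ⟨fun z => if h : z ∈ Y ∧ z ∈ C₀ ∧ x ∈ z then z else
      (if h' : z ⊆ Hset θ ∧ #z < κ then (hbig z h'.1 h'.2).choose else ∅), ?_, ?_⟩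
    · intro z hz1 hz2
      dsimp only
      by_cases h : z ∈ Y ∧ z ∈ C₀ ∧ x ∈ z
      · rw [dif_pos h]
        exact ⟨h.1, h.2.1, h.2.2, subset_rfl⟩
      · rw [dif_neg h, dif_pos (show z ⊆ Hset θ ∧ #z < κ from ⟨hz1, hz2⟩)]
        obtain ⟨a1, a2, a3, a4⟩ := (hbig z hz1 hz2).choose_spec
        exact ⟨a1, a2, a3, a4⟩
    · intro z h1 h2 h3
      dsimp only
      rw [dif_pos (show z ∈ Y ∧ z ∈ C₀ ∧ x ∈ z from ⟨h1, h2, h3⟩)]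
  obtain ⟨cex, hcex⟩ :
      ∃ f : Set ZFSet.{u} → Set ZFSet.{u},
        ∀ M, M ∈ Y → M ∈ C₀ → x ∈ M →
          f M ⊆ x.toSet ∧ Approx μ M x (f M) ∧
          ∀ N, N ∈ S → x ∈ N → N ⊆ M → ¬ Guessed N (f M) := by
    refine ⟨fun M => if h : M ∈ Y ∧ M ∈ C₀ ∧ x ∈ M then
      (Hfail M h.1 h.2.1 h.2.2).choose else ∅, ?_⟩
    intro M h1 h2 h3
    dsimp only
    rw [dif_pos (show M ∈ Y ∧ M ∈ C₀ ∧ x ∈ M from ⟨h1, h2, h3⟩)]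
    exact (Hfail M h1 h2 h3).choose_spec
  -- The list.
  have hdsub : ∀ z : Set ZFSet.{u}, theList θ κ cex Msel z ⊆ z := theList_sub θ κ cex Msel
  have hslender : Slender μ κ (Hset θ) Y (theList θ κ cex Msel) := by
    refine ⟨θ, fun θ' hθ' => ⟨GoodSet μ κ θ θ' C₀ x,
      goodClub hκreg hμunc hμκ hθ' hC₀ hx, ?_⟩⟩
    rintro M' ⟨hM'1, hM'2, hM'3, hM'4, hM'5, hM'6⟩ hMY y hyM' hy1 hy2
    have hMsub : M' ∩ Hset θ ⊆ Hset θ := Set.inter_subset_right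
    have hMκ : #(M' ∩ Hset θ : Set ZFSet.{u}) < κ :=
      lt_of_le_of_lt (Cardinal.mk_le_mk_of_subset Set.inter_subset_left) hM'2
    have hxM : x ∈ M' ∩ Hset θ := ⟨hM'3, hx⟩
    have hMeq : Msel (M' ∩ Hset θ) = M' ∩ Hset θ := hMsel2 _ hMY hM'4 hxM
    obtain ⟨hc1, hc2, hc3⟩ := hcex (M' ∩ Hset θ) hMY hM'4 hxM
    have hwM' : y ∩ x ∈ M' := hM'6 y hyM' x hM'3
    have hwH : y ∩ x ∈ Hset θ := inter_mem_hset_right y hx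
    have hwM : y ∩ x ∈ M' ∩ Hset θ := ⟨hwM', hwH⟩
    have hwsub : (y ∩ x).toSet ⊆ x.toSet := by
      rw [ZFSet.toSet_inter]; exact Set.inter_subset_right
    have hwμ : #(y ∩ x).toSet < μ := by
      refine lt_of_le_of_lt (Cardinal.mk_le_mk_of_subset ?_) hy2
      rw [ZFSet.toSet_inter]; exact Set.inter_subset_left
    obtain ⟨e', he'M, he'eq⟩ := hc2 (y ∩ x) hwM hwsub hwμ
    refine ⟨e' ∩ (y ∩ x), hM'6 e' he'M.1 (y ∩ x) hwM', ?_⟩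
    have hyTS : y.toSet ⊆ M' ∩ Hset θ := fun t ht => ⟨hM'5 y hyM' hy2 ht, hy1 ht⟩
    rw [theList_val hMsub hMκ, hMeq, ZFSet.toSet_inter]
    calc e'.toSet ∩ (y ∩ x).toSet = cex (M' ∩ Hset θ) ∩ (y ∩ x).toSet := he'eq.symm
      _ = cex (M' ∩ Hset θ) ∩ (y.toSet ∩ x.toSet) := by rw [ZFSet.toSet_inter]
      _ = (cex (M' ∩ Hset θ) ∩ x.toSet) ∩ y.toSet := by
            rw [Set.inter_comm y.toSet x.toSet, ← Set.inter_assoc]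
      _ = cex (M' ∩ Hset θ) ∩ y.toSet := by rw [Set.inter_eq_left.mpr hc1]
      _ = cex (M' ∩ Hset θ) ∩ (M' ∩ Hset θ) ∩ y.toSet := by
            rw [Set.inter_assoc, Set.inter_eq_right.mpr hyTS]
  obtain ⟨b, hbsub, hbr⟩ := hSP (theList θ κ cex Msel) hdsub hslender
  -- The killing challenge.
  have he₀H : ZFSet.sep (· ∈ b) x ∈ Hset θ := sep_mem_hset hx _
  have he₀TS : (ZFSet.sep (· ∈ b) x).toSet = x.toSet ∩ b := by
    rw [ZFSet.toSet_sep]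
    ext t
    exact Iff.rfl
  obtain ⟨N, hNS, hNsub⟩ :
      ∃ N ∈ S, ({x, ZFSet.sep (· ∈ b) x} : Set ZFSet.{u}) ⊆ N := by
    refine hS2 _ ?_ ?_
    · intro t ht
      rcases ht with rfl | ht
      · exact hx
      · rw [Set.mem_singleton_iff] at ht
        subst ht
        exact he₀H
    · refine lt_of_lt_of_le ?_ hκreg.aleph0_le
      exact ((Set.finite_singleton _).insert _).lt_aleph0
  have hNH : N ⊆ Hset θ := (hS1 N hNS).1
  have hNκ : #N < κ := (hS1 N hNS).2
  obtain ⟨z, hz1, hz2, hz3, hz4⟩ := hbr N hNH hNκ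
  obtain ⟨hMz1, hMz2, hMz3, hMz4⟩ := hMsel1 z hz1 hz2
  obtain ⟨hcz1, hcz2, hcz3⟩ := hcex (Msel z) hMz1 hMz2 hMz3
  have hxN : x ∈ N := hNsub (Set.mem_insert _ _)
  have he₀N : ZFSet.sep (· ∈ b) x ∈ N := hNsub (Set.mem_insert_of_mem _ rfl)
  refine hcz3 N hNS hxN (hz3.trans hMz4) ?_
  refine ⟨ZFSet.sep (· ∈ b) x, he₀N, ?_⟩
  have h1 : b ∩ N = cex (Msel z) ∩ N := by
    rw [hz4, theList_val hz1 hz2, Set.inter_assoc, Set.inter_eq_right.mpr hz3]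
  rw [he₀TS, Set.inter_assoc, h1, ← Set.inter_assoc, Set.inter_eq_right.mpr hcz1]
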